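/- For a pair (a, x) of coprime integers with 1 ≤ a ≤ x, the numerator of the q-rational x/a satisfies N_q(x/a) = (a, x − a)_q (when x > a), and the denominator satisfies D_q(x/a) = (a − r, r)_q where r is the remainder of x divided by a. -/

import Mathlib

open Polynomial

/-- The `q`-integer `[c]_q = 1 + q + ⋯ + q^{c-1}` as a polynomial in `ℤ[q]`. -/
noncomputable def qInt (c : ℕ) : Polynomial ℤ := ∑ i ∈ Finset.range c, X ^ i

/-- The polynomial `(a, b)_q ∈ ℤ[q]` associated to a pair of coprime positive
integers: `(1, n)_q = (n, 1)_q = [n+1]_q`; if `a < b` then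
`(a,b)_q = (a-r, r)_q + q·(a, b-a)_q` with `r = b % a`; if `a > b` then
`(a,b)_q = (a-b, b)_q + q^⌈a/b⌉·(r, b-r)_q` with `r = a % b`.
(Values on non-coprime or zero inputs are junk.) -/
noncomputable def W : ℕ → ℕ → Polynomial ℤ
  | 1, b => qInt (b + 1)
  | a, 1 => qInt (a + 1)
  | 0, _ => 0
  | _, 0 => 0
  | a + 2, b + 2 =>
    if a < b then
      W (a + 2 - (b + 2) % (a + 2)) ((b + 2) % (a + 2)) + X * W (a + 2) (b - a)
    else
      W (a - b) (b + 2) +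
        X ^ ((a + 2 + (b + 2) - 1) / (b + 2)) *
          W ((a + 2) % (b + 2)) (b + 2 - (a + 2) % (b + 2))
  termination_by a b => a + b
  decreasing_by
  · have := Nat.mod_lt (b + 2) (show 0 < a + 2 by omega); omega
  · omega
  · omega
  · have := Nat.mod_lt (a + 2) (show 0 < b + 2 by omega); omega

/-- The sequence of digits of the negative continued fraction expansion
`x/a = [c₁, …, c_l]⁻` (each `cᵢ = ⌈·⌉` of the current fraction). By convention
`ncfDigits x 0 = []` (for `1/0 = ∞`) and `ncfDigits x 1 = [x]`. -/
def ncfDigits : ℕ → ℕ → List ℕ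
  | _, 0 => []
  | x, 1 => [x]
  | x, a + 2 =>
      (x + (a + 2) - 1) / (a + 2) ::
        ncfDigits (a + 2) ((x + (a + 2) - 1) / (a + 2) * (a + 2) - x)
  termination_by x a => a
  decreasing_by
    have := Nat.div_mul_le_self (x + (a + 2) - 1) (a + 2); omega

/-- The (coprime) numerator and denominator of the Morier-Genoud–Ovsienko
`q`-deformation of the negative continued fraction `[c₁, …, c_l]⁻`, computed by
the continuant recursion `(N, D) ↦ ([c]_q·N - q^{c-1}·D, N)`, with `(1, 0)` for
the empty list. -/
noncomputable def qCF : List ℕ → Polynomial ℤ × Polynomial ℤ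
  | [] => (1, 0)
  | c :: rest =>
      let p := qCF rest
      (qInt c * p.1 - X ^ (c - 1) * p.2, p.1)

/-- Numerator `N_q(x/a)` of the Morier-Genoud–Ovsienko `q`-rational `[x/a]_q`. -/
noncomputable def Nq (x a : ℕ) : Polynomial ℤ := (qCF (ncfDigits x a)).1

/-- Denominator `D_q(x/a)` of the Morier-Genoud–Ovsienko `q`-rational `[x/a]_q`. -/
noncomputable def Dq (x a : ℕ) : Polynomial ℤ := (qCF (ncfDigits x a)).2

/-- The normalized Jones polynomial `J_{x/a}(q) = q·N_q(x/a) + (1-q)·D_q(x/a)`. -/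
noncomputable def Jq (x a : ℕ) : Polynomial ℤ := X * Nq x a + (1 - X) * Dq x a


/-! ### Auxiliary lemmas -/

private lemma qInt_one : qInt 1 = 1 := by simp [qInt]

private lemma qInt_two : qInt 2 = 1 + X := by
  simp [qInt, Finset.sum_range_succ]

private lemma qInt_succ (n : ℕ) : qInt (n + 1) = qInt n + X ^ n := by
  simp [qInt, Finset.sum_range_succ]

private lemma qInt_one_add (n : ℕ) : qInt (n + 1) = 1 + X * qInt n := by
  rw [qInt, qInt, Finset.sum_range_succ']
  simp only [pow_succ, pow_zero, ← Finset.sum_mul]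
  ring

private lemma qInt_key (n : ℕ) :
    qInt 2 * qInt (n + 1) - X * qInt n = qInt (n + 2) := by
  rw [qInt_two, qInt_succ n, show n + 2 = n + 1 + 1 from rfl, qInt_succ (n + 1),
    qInt_succ n, pow_succ]
  ring

private lemma W_one_left (b : ℕ) : W 1 b = qInt (b + 1) := by
  match b with
  | 0 => delta W W._unary; rw [WellFounded.Nat.fix_eq]
  | 1 => delta W W._unary; rw [WellFounded.Nat.fix_eq]
  | n + 2 => delta W W._unary; rw [WellFounded.Nat.fix_eq]

private lemma W_right_one (a : ℕ) : W (a + 2) 1 = qInt (a + 3) := by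
  delta W W._unary; rw [WellFounded.Nat.fix_eq]

private lemma W_two (a b : ℕ) : W (a + 2) (b + 2) =
    if a < b then
      W (a + 2 - (b + 2) % (a + 2)) ((b + 2) % (a + 2)) + X * W (a + 2) (b - a)
    else
      W (a - b) (b + 2) +
        X ^ ((a + 2 + (b + 2) - 1) / (b + 2)) *
          W ((a + 2) % (b + 2)) (b + 2 - (a + 2) % (b + 2)) := by
  delta W W._unary; rw [WellFounded.Nat.fix_eq]; rfl

private lemma W_a_one {a : ℕ} (h : 1 ≤ a) : W a 1 = qInt (a + 1) := by
  match a, h with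
  | 1, _ => exact W_one_left 1
  | (n + 2), _ => exact W_right_one n

private lemma W_lt_rec (a b : ℕ) (h2a : 2 ≤ a) (hab : a < b) :
    W a b = W (a - b % a) (b % a) + X * W a (b - a) := by
  obtain ⟨A, rfl⟩ : ∃ A, a = A + 2 := ⟨a - 2, by omega⟩
  obtain ⟨B, rfl⟩ : ∃ B, b = B + 2 := ⟨b - 2, by omega⟩
  rw [W_two, if_pos (show A < B by omega), show B - A = B + 2 - (A + 2) from by omega]

private lemma W_gt_rec (a b : ℕ) (h2b : 2 ≤ b) (hba : b < a) :
    W a b = W (a - b) b +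
      X ^ ((a + b - 1) / b) * W (a % b) (b - a % b) := by
  obtain ⟨A, rfl⟩ : ∃ A, a = A + 2 := ⟨a - 2, by omega⟩
  obtain ⟨B, rfl⟩ : ∃ B, b = B + 2 := ⟨b - 2, by omega⟩
  rw [W_two, if_neg (show ¬ A < B by omega), show A - B = A + 2 - (B + 2) from by omega]

private lemma nat_div_eq {a m n s : ℕ} (ha : 0 < a) (hs : s < a)
    (hm : m = a * n + s) : m / a = n := by
  subst hm
  rw [Nat.mul_add_div ha, Nat.div_eq_of_lt hs, Nat.add_zero]

private lemma ncf_two (x a : ℕ) (h : 2 ≤ a) : ncfDigits x a =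
    (x + a - 1) / a :: ncfDigits a ((x + a - 1) / a * a - x) := by
  obtain ⟨A, rfl⟩ : ∃ A, a = A + 2 := ⟨a - 2, by omega⟩
  rw [ncfDigits]

private lemma ncf_one (x : ℕ) : ncfDigits x 1 = [x] := by rw [ncfDigits]

/-- The key step identity for `W` at a single "Euclid step". -/
private lemma Wstar (a' b : ℕ) (hb : 2 ≤ b) (ha' : 1 ≤ a') (hne : a' ≠ b) :
    W a' b = W (a' - (a' + b) % a') ((a' + b) % a') +
      X ^ ((a' + b + b - 1) / b - 1) * W ((a' + b) % b) (b - (a' + b) % b) := by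
  rw [Nat.add_mod_left, Nat.add_mod_right]
  rcases eq_or_lt_of_le ha' with h1 | h1
  · -- a' = 1
    obtain rfl : a' = 1 := h1.symm
    rw [Nat.mod_one, Nat.mod_eq_of_lt (show 1 < b by omega)]
    have e : (1 + b + b - 1) / b = 2 :=
      nat_div_eq (show 0 < b by omega) (show 0 < b by omega) (by omega)
    rw [e, show (2:ℕ) - 1 = 1 from rfl, pow_one]
    rw [W_one_left b, W_one_left 0, W_one_left (b - 1), qInt_one,
      show b - 1 + 1 = b from by omega]
    exact qInt_one_add b
  · -- 2 ≤ a'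
    rcases lt_trichotomy a' b with h2 | h2 | h2
    · -- a' < b
      rw [W_lt_rec a' b (by omega) h2, Nat.mod_eq_of_lt h2]
      have e : (a' + b + b - 1) / b = 2 :=
        nat_div_eq (show 0 < b by omega) (show a' - 1 < b by omega) (by omega)
      rw [e, show (2:ℕ) - 1 = 1 from rfl, pow_one]
    · exact absurd h2 hne
    · -- b < a'
      rw [W_gt_rec a' b hb h2, Nat.mod_eq_of_lt h2]
      have e : (a' + b + b - 1) / b = (a' + b - 1) / b + 1 := by
        rw [show a' + b + b - 1 = (a' + b - 1) + b from by omega,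
          Nat.add_div_right _ (show 0 < b by omega)]
      rw [e, Nat.add_sub_cancel]

/-- The key lemma: `W` satisfies the same recursion as the `q`-deformed
negative continued fraction continuants. -/
private lemma Wkey : ∀ b : ℕ, ∀ a : ℕ, 2 ≤ a → 1 ≤ b → Nat.Coprime a b →
    W a b = qInt ((a + b + a - 1) / a) * W (a - b % a) (b % a) -
      X ^ ((a + b + a - 1) / a - 1) *
        W (a - b % a - a % (a - b % a)) (a % (a - b % a)) := by
  intro b
  induction b using Nat.strong_induction_on with
  | _ b IH =>
    intro a ha hb hco
    have hr0 : b % a ≠ 0 := by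
      intro h
      have hd : a ∣ b := Nat.dvd_of_mod_eq_zero h
      have := Nat.Coprime.eq_one_of_dvd hco hd
      omega
    have hrlt : b % a < a := Nat.mod_lt _ (by omega)
    rcases lt_trichotomy b a with hba | hba | hba
    · -- b < a
      rw [Nat.mod_eq_of_lt hba]
      have hc : (a + b + a - 1) / a = 2 :=
        nat_div_eq (by omega) (show b - 1 < a by omega) (by omega)
      rw [hc, show (2:ℕ) - 1 = 1 from rfl, pow_one]
      rcases eq_or_lt_of_le hb with h1 | h1
      · -- b = 1
        obtain rfl : b = 1 := h1.symm
        rw [W_a_one (show (1:ℕ) ≤ a by omega), W_a_one (show 1 ≤ a - 1 by omega)]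
        have e3 : W (a - 1 - a % (a - 1)) (a % (a - 1)) = qInt (a - 1) := by
          rcases eq_or_lt_of_le ha with h2 | h2
          · obtain rfl : a = 2 := h2.symm
            norm_num
            rw [W_one_left 0]
          · have em : a % (a - 1) = 1 := by
              have h3 := Nat.mod_eq_sub_mod (show a - 1 ≤ a by omega)
              rw [show a - (a - 1) = 1 from by omega] at h3
              rw [h3, Nat.mod_eq_of_lt (by omega)]
            rw [em, W_a_one (show 1 ≤ a - 1 - 1 by omega)]
            congr 1
            omega
        rw [e3]
        have h := qInt_key (a - 1)
        rw [show a - 1 + 2 = a + 1 from by omega] at h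
        rw [show a - 1 + 1 = a + 1 - 1 from by omega] at h ⊢
        exact h.symm
      · -- 2 ≤ b
        have hne : a - b ≠ b := by
          intro h
          have hd : b ∣ a := ⟨2, by omega⟩
          have := Nat.Coprime.eq_one_of_dvd hco.symm hd
          omega
        have hstar := Wstar (a - b) b (by omega) (by omega) hne
        rw [show a - b + b = a from by omega] at hstar
        rw [W_gt_rec a b (by omega) hba, hstar, qInt_two]
        have hK : 1 ≤ (a + b - 1) / b :=
          (Nat.one_le_div_iff (by omega)).mpr (by omega)
        have hpow : (X : Polynomial ℤ) ^ ((a + b - 1) / b) =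
            X * X ^ ((a + b - 1) / b - 1) := by
          conv_lhs => rw [show (a + b - 1) / b = ((a + b - 1) / b - 1) + 1 from by omega]
          rw [pow_succ]
          ring
        rw [hpow]
        ring
    · -- b = a : impossible
      exfalso
      apply hr0
      rw [hba, Nat.mod_self]
    · -- a < b
      have hcop' : Nat.Coprime a (b - a) :=
        (Nat.coprime_sub_self_right (le_of_lt hba)).mpr hco
      have IH' := IH (b - a) (by omega) a ha (by omega) hcop'
      have hmod : (b - a) % a = b % a := (Nat.mod_eq_sub_mod (le_of_lt hba)).symm
      rw [hmod] at IH'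
      have hdm := Nat.div_add_mod b a
      have hk1 : 1 ≤ b / a := (Nat.one_le_div_iff (by omega)).mpr (by omega)
      obtain ⟨k, hk⟩ : ∃ k, b / a = k + 1 := ⟨b / a - 1, by omega⟩
      rw [hk, Nat.mul_add, Nat.mul_one] at hdm
      have hc1 : (a + b + a - 1) / a = k + 3 :=
        nat_div_eq (by omega) (show b % a - 1 < a by omega)
          (by rw [Nat.mul_add]; omega)
      have hc2 : (a + (b - a) + a - 1) / a = k + 2 :=
        nat_div_eq (by omega) (show b % a - 1 < a by omega)
          (by rw [Nat.mul_add]; omega)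
      rw [hc2] at IH'
      rw [hc1, W_lt_rec a b ha hba, IH']
      rw [show k + 2 - 1 = k + 1 from rfl, show k + 3 - 1 = k + 2 from rfl]
      rw [show qInt (k + 3) = 1 + X * qInt (k + 2) from qInt_one_add (k + 2)]
      rw [show (X : Polynomial ℤ) ^ (k + 2) = X ^ (k + 1) * X from pow_succ X (k + 1)]
      ring

private lemma main_aux : ∀ x : ℕ, ∀ a : ℕ, Nat.Coprime a x → 1 ≤ a → a ≤ x →
    (a < x → Nq x a = W a (x - a)) ∧ Dq x a = W (a - x % a) (x % a) := by
  intro x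
  induction x using Nat.strong_induction_on with
  | _ x IH =>
    intro a hco ha hax
    rcases eq_or_lt_of_le ha with h1 | h1
    · -- a = 1
      obtain rfl : a = 1 := h1.symm
      constructor
      · intro hx
        rw [Nq, ncf_one]
        simp only [qCF, mul_one, mul_zero, sub_zero]
        rw [W_one_left (x - 1), show x - 1 + 1 = x from by omega]
      · rw [Dq, ncf_one]
        simp only [qCF]
        rw [Nat.mod_one, Nat.sub_zero, W_one_left 0, qInt_one]
    · -- 2 ≤ a
      have hr0 : x % a ≠ 0 := by
        intro h
        have hd : a ∣ x := Nat.dvd_of_mod_eq_zero h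
        have := Nat.Coprime.eq_one_of_dvd hco hd
        omega
      have hrlt : x % a < a := Nat.mod_lt _ (by omega)
      have hax' : a < x := by
        rcases eq_or_lt_of_le hax with h | h
        · exfalso; apply hr0; rw [← h, Nat.mod_self]
        · exact h
      have hd := ncf_two x a (by omega)
      have hdm := Nat.div_add_mod x a
      have hk1 : 1 ≤ x / a := (Nat.one_le_div_iff (by omega)).mpr hax
      have hc : (x + a - 1) / a = x / a + 1 :=
        nat_div_eq (by omega) (show x % a - 1 < a by omega)
          (by rw [Nat.mul_add, Nat.mul_one]; omega)
      have ha1 : (x + a - 1) / a * a - x = a - x % a := by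
        rw [hc, Nat.add_mul, Nat.one_mul, Nat.mul_comm (x / a) a]
        omega
      rw [ha1] at hd
      -- coprimality of the next pair
      have c1 : Nat.Coprime (x % a) a := by
        rw [Nat.Coprime, ← Nat.gcd_rec]
        exact hco
      have c2 : Nat.Coprime (a - x % a) (x % a) :=
        (Nat.coprime_sub_self_left (le_of_lt hrlt)).mpr c1.symm
      have hcop2 : Nat.Coprime (a - x % a) a := by
        have h3 := (Nat.coprime_add_self_right (m := a - x % a) (n := x % a)).mpr c2
        rwa [show x % a + (a - x % a) = a from by omega] at h3
      obtain ⟨IH2N, IH2D⟩ := IH a hax' (a - x % a) hcop2 (by omega) (by omega)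
      have hNa : Nq a (a - x % a) = W (a - x % a) (x % a) := by
        have h4 := IH2N (by omega)
        rwa [show a - (a - x % a) = x % a from by omega] at h4
      rw [Nq] at hNa
      rw [Dq] at IH2D
      constructor
      · intro _
        rw [Nq, hd]
        simp only [qCF]
        have hW := Wkey (x - a) a (by omega) (by omega)
          ((Nat.coprime_sub_self_right hax).mpr hco)
        rw [show a + (x - a) + a - 1 = x + a - 1 from by omega,
          show (x - a) % a = x % a from (Nat.mod_eq_sub_mod hax).symm] at hW
        rw [hW, ← hNa, ← IH2D]
      · rw [Dq, hd]
        simp only [qCF]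
        exact hNa

/-- For coprime `1 ≤ a ≤ x`: `N_q(x/a) = (a, x-a)_q` (when `x > a`) and
`D_q(x/a) = (a-r, r)_q` where `r = x % a`. -/
theorem Nq_Dq_eq_W (a x : ℕ) (hco : Nat.Coprime a x) (ha : 1 ≤ a) (hax : a ≤ x) :
    (a < x → Nq x a = W a (x - a)) ∧ Dq x a = W (a - x % a) (x % a) :=
  main_aux x a hco ha hax
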